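/- arXiv:2103.05702 — 3 statements merged into one kernel-verified Lean document; each statement's English description precedes it below -/
import Mathlib

section
/- Let H be a complex Hilbert space, let k be an integer with 0 < k < dim H − 1, and let X, Y be adjacent k-dimensional subspaces of H. A k-dimensional subspace Z of H with Z not contained in X + Y is ortho-adjacent to both X and Y if and only if Z = (X ∩ Y) + P for some 1-dimensional subspace P of H orthogonal to X + Y. -/
noncomputable section

open scoped Classical

set_option linter.unusedSectionVars false

variable {H : Type*} [NormedAddCommGroup H] [InnerProductSpace ℂ H] [CompleteSpace H]

/-- The orthogonal projection onto `X`, as an operator `H → H` (junk value `0` if the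
orthogonal projection onto `X` does not exist; it always exists for finite-dimensional,
and more generally complete, subspaces). -/
noncomputable def projOn (X : Submodule ℂ H) : H →L[ℂ] H :=
  if h : Submodule.HasOrthogonalProjection X then
    haveI := h
    X.subtypeL.comp (Submodule.orthogonalProjectionOnto X)
  else 0

/-- Two subspaces of `H` are compatible if their orthogonal projections commute. -/
def Compatible (X Y : Submodule ℂ H) : Prop :=
  projOn X * projOn Y = projOn Y * projOn X

/-- `X` is a `k`-dimensional subspace of `H`. -/
def IsDim (k : ℕ) (X : Submodule ℂ H) : Prop :=
  FiniteDimensional ℂ X ∧ Module.finrank ℂ X = k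

/-- Two (distinct) `k`-dimensional subspaces are adjacent if their intersection is
`(k-1)`-dimensional. -/
def AdjacentSub (k : ℕ) (X Y : Submodule ℂ H) : Prop :=
  X ≠ Y ∧ Module.finrank ℂ ↥(X ⊓ Y) = k - 1

/-- Ortho-adjacency: adjacent and compatible. -/
def OrthoAdjacent (k : ℕ) (X Y : Submodule ℂ H) : Prop :=
  AdjacentSub k X Y ∧ Compatible X Y

/-- The ortho-Grassmann graph `Γ⊥_k(H)` on the `k`-dimensional subspaces of `H`:
two `k`-dimensional subspaces are connected by an edge if they are ortho-adjacent. -/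
def orthoGrassmannGraph (H : Type*) [NormedAddCommGroup H] [InnerProductSpace ℂ H]
    [CompleteSpace H] (k : ℕ) : SimpleGraph {X : Submodule ℂ H // IsDim k X} where
  Adj X Y := OrthoAdjacent k X.1 Y.1
  symm := ⟨by
    rintro X Y ⟨⟨hne, hdim⟩, hc⟩
    refine ⟨⟨hne.symm, by rwa [inf_comm]⟩, ?_⟩
    unfold Compatible at hc ⊢
    exact hc.symm⟩
  loopless := ⟨fun X h => h.1.1 rfl⟩

/-- The Grassmann graph `Γ_k(H)` on the `k`-dimensional subspaces of `H`:
two `k`-dimensional subspaces are connected by an edge if they are adjacent. -/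
def grassmannGraph (H : Type*) [NormedAddCommGroup H] [InnerProductSpace ℂ H]
    [CompleteSpace H] (k : ℕ) : SimpleGraph {X : Submodule ℂ H // IsDim k X} where
  Adj X Y := AdjacentSub k X.1 Y.1
  symm := ⟨by
    rintro X Y ⟨hne, hdim⟩
    exact ⟨hne.symm, by rwa [inf_comm]⟩⟩
  loopless := ⟨fun X h => h.1 rfl⟩

lemma projOn_apply (X : Submodule ℂ H) [Submodule.HasOrthogonalProjection X] (x : H) :
    projOn X x = (Submodule.orthogonalProjectionOnto X x : H) := by
  simp [projOn, dif_pos ‹Submodule.HasOrthogonalProjection X›]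

lemma projOn_mem (X : Submodule ℂ H) [Submodule.HasOrthogonalProjection X] (x : H) :
    projOn X x ∈ X := by
  rw [projOn_apply]; exact (Submodule.orthogonalProjectionOnto X x).2

lemma projOn_eq_self (X : Submodule ℂ H) [Submodule.HasOrthogonalProjection X] {x : H} (hx : x ∈ X) :
    projOn X x = x := by
  rw [projOn_apply]; exact (Submodule.starProjection_eq_self_iff (K := X)).2 hx

lemma projOn_eq_zero (X : Submodule ℂ H) [Submodule.HasOrthogonalProjection X] {x : H} (hx : x ∈ Xᗮ) :
    projOn X x = 0 := by
  rw [projOn_apply, Submodule.orthogonalProjectionOnto_apply_of_mem_orthogonal hx]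
  simp

lemma sub_projOn_mem_orthogonal (X : Submodule ℂ H) [Submodule.HasOrthogonalProjection X] (x : H) :
    x - projOn X x ∈ Xᗮ := by
  rw [projOn_apply]; exact Submodule.sub_starProjection_mem_orthogonal (K := X) x

lemma projOn_unique (X : Submodule ℂ H) [Submodule.HasOrthogonalProjection X] {x v : H}
    (hv : v ∈ X) (h : x - v ∈ Xᗮ) : projOn X x = v := by
  rw [projOn_apply]
  exact Submodule.eq_starProjection_of_mem_of_inner_eq_zero hv
    (fun w hw => (Submodule.mem_orthogonal' X _).1 h w hw)

/-- Decomposition from compatibility. -/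
lemma compatible_decomp {Z X : Submodule ℂ H} [Submodule.HasOrthogonalProjection Z]
    [Submodule.HasOrthogonalProjection X] (h : Compatible Z X) : Z = (Z ⊓ X) ⊔ (Z ⊓ Xᗮ) := by
  refine le_antisymm (fun z hz => ?_) (sup_le inf_le_left inf_le_left)
  have hPXz : projOn X z ∈ Z := by
    have h1 := DFunLike.congr_fun h.symm z
    simp only [ContinuousLinearMap.mul_apply] at h1
    rw [projOn_eq_self Z hz] at h1
    rw [h1]; exact projOn_mem Z _
  have h2 : z = projOn X z + (z - projOn X z) := by abel
  rw [h2]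
  exact Submodule.add_mem_sup ⟨hPXz, projOn_mem X z⟩
    ⟨Z.sub_mem hz hPXz, sub_projOn_mem_orthogonal X z⟩

/-- Sum formula for the projection onto an orthogonal sup. -/
lemma projOn_sup {A B X : Submodule ℂ H} [Submodule.HasOrthogonalProjection A] [Submodule.HasOrthogonalProjection B]
    [Submodule.HasOrthogonalProjection (A ⊔ B)] (hA : A ≤ X) (hB : B ≤ Xᗮ) (x : H) :
    projOn (A ⊔ B) x = projOn A x + projOn B x := by
  have hBA : B ≤ Aᗮ := hB.trans (Submodule.orthogonal_le hA)
  have hAB : A ≤ Bᗮ := le_trans (le_trans hA (Submodule.le_orthogonal_orthogonal X))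
    (Submodule.orthogonal_le hB)
  refine projOn_unique _ (Submodule.add_mem_sup (projOn_mem A x) (projOn_mem B x)) ?_
  rw [← Submodule.inf_orthogonal]
  constructor
  · have h1 : x - projOn A x ∈ Aᗮ := sub_projOn_mem_orthogonal A x
    have h2 : projOn B x ∈ Aᗮ := hBA (projOn_mem B x)
    have := Aᗮ.sub_mem h1 h2
    simpa [sub_sub] using this
  · have h1 : x - projOn B x ∈ Bᗮ := sub_projOn_mem_orthogonal B x
    have h2 : projOn A x ∈ Bᗮ := hAB (projOn_mem A x)
    have := Bᗮ.sub_mem h1 h2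
    simpa [sub_sub, add_comm] using this

/-- Compatibility from decomposition. -/
lemma compatible_of_decomp {A B X : Submodule ℂ H} [Submodule.HasOrthogonalProjection A]
    [Submodule.HasOrthogonalProjection B] [Submodule.HasOrthogonalProjection (A ⊔ B)] [Submodule.HasOrthogonalProjection X]
    (hA : A ≤ X) (hB : B ≤ Xᗮ) : Compatible (A ⊔ B) X := by
  have hXB : X ≤ Bᗮ := le_trans (Submodule.le_orthogonal_orthogonal X)
    (Submodule.orthogonal_le hB)
  ext x
  show projOn (A ⊔ B) (projOn X x) = projOn X (projOn (A ⊔ B) x)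
  rw [projOn_sup hA hB, projOn_sup hA hB, map_add]
  have e1 : projOn A (projOn X x) = projOn A x := by
    have h0 : projOn A (x - projOn X x) = 0 :=
      projOn_eq_zero A (Submodule.orthogonal_le hA (sub_projOn_mem_orthogonal X x))
    rw [map_sub, sub_eq_zero] at h0
    exact h0.symm
  have e2 : projOn B (projOn X x) = 0 := projOn_eq_zero B (hXB.trans (by rfl) (projOn_mem X x))
  have e3 : projOn X (projOn A x) = projOn A x := projOn_eq_self X (hA (projOn_mem A x))
  have e4 : projOn X (projOn B x) = 0 := projOn_eq_zero X (hB (projOn_mem B x))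
  rw [e1, e2, e3, e4]

/-- Backward direction: ortho-adjacency of an orthogonal extension. -/
lemma orthoAdjacent_of_sup {k : ℕ} {W P X : Submodule ℂ H}
    (hXfd : FiniteDimensional ℂ X) [FiniteDimensional ℂ W] [FiniteDimensional ℂ P]
    (hWX : W ≤ X) (hPX : P ≤ Xᗮ) (hne : W ⊔ P ≠ X)
    (hWdim : Module.finrank ℂ W = k - 1) :
    OrthoAdjacent k (W ⊔ P) X := by
  haveI := hXfd
  refine ⟨⟨hne, ?_⟩, compatible_of_decomp hWX hPX⟩
  have hinf : (W ⊔ P) ⊓ X = W := by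
    refine le_antisymm ?_ (le_inf le_sup_left hWX)
    rintro z ⟨hz1, hz2⟩
    obtain ⟨w, hw, p, hp, rfl⟩ := Submodule.mem_sup.1 hz1
    have hpX : p ∈ X := by
      have := X.sub_mem hz2 (hWX hw); simpa using this
    have hbot : p ∈ X ⊓ Xᗮ := ⟨hpX, hPX hp⟩
    rw [Submodule.inf_orthogonal_eq_bot, Submodule.mem_bot] at hbot
    simpa [hbot] using hw
  rw [hinf]
  exact hWdim

set_option maxHeartbeats 1000000 in
/-- Let `X, Y` be adjacent `k`-dimensional subspaces of `H` with `k < dim H - 1`.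
A `k`-dimensional subspace `Z ⊄ X + Y` is ortho-adjacent to both `X, Y` if and only if
`Z = (X ∩ Y) + P` for some `1`-dimensional subspace `P` orthogonal to `X + Y`. -/
theorem orthoAdjacent_to_both_iff_of_not_le_sup
    (k : ℕ) (hk : 0 < k) (hkH : (k : Cardinal) + 1 < Module.rank ℂ H)
    (X Y Z : Submodule ℂ H) (hX : IsDim k X) (hY : IsDim k Y) (hZ : IsDim k Z)
    (hXY : AdjacentSub k X Y) (hZnle : ¬ Z ≤ X ⊔ Y) :
    (OrthoAdjacent k Z X ∧ OrthoAdjacent k Z Y) ↔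
      ∃ P : Submodule ℂ H, IsDim 1 P ∧ P ≤ (X ⊔ Y)ᗮ ∧ Z = (X ⊓ Y) ⊔ P := by
  obtain ⟨hXfd, hXdim⟩ := hX
  obtain ⟨hYfd, hYdim⟩ := hY
  obtain ⟨hZfd, hZdim⟩ := hZ
  haveI := hXfd; haveI := hYfd; haveI := hZfd
  haveI : FiniteDimensional ℂ ↥(X ⊓ Y) := Submodule.finiteDimensional_of_le inf_le_left
  constructor
  · rintro ⟨⟨⟨hZXne, hZXdim⟩, hZXc⟩, ⟨⟨hZYne, hZYdim⟩, hZYc⟩⟩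
    haveI : FiniteDimensional ℂ ↥(Z ⊓ X) := Submodule.finiteDimensional_of_le inf_le_left
    haveI : FiniteDimensional ℂ ↥(Z ⊓ Y) := Submodule.finiteDimensional_of_le inf_le_left
    haveI : FiniteDimensional ℂ ↥(Z ⊓ Xᗮ) := Submodule.finiteDimensional_of_le inf_le_left
    have h1 : Z = (Z ⊓ X) ⊔ (Z ⊓ Xᗮ) := compatible_decomp hZXc
    have h2 : Z = (Z ⊓ Y) ⊔ (Z ⊓ Yᗮ) := compatible_decomp hZYc
    -- `Z ⊓ X = Z ⊓ Y`, else `Z ≤ X ⊔ Y`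
    have hXYeq : Z ⊓ X = Z ⊓ Y := by
      by_contra hne
      have hlt : Z ⊓ X < (Z ⊓ X) ⊔ (Z ⊓ Y) := by
        rcases lt_or_eq_of_le (le_sup_left : Z ⊓ X ≤ (Z ⊓ X) ⊔ (Z ⊓ Y)) with h | h
        · exact h
        · exfalso
          have hle : Z ⊓ Y ≤ Z ⊓ X := h ▸ le_sup_right
          exact hne (Submodule.eq_of_le_of_finrank_le hle
            (by rw [hZXdim, hZYdim])).symm
      haveI : FiniteDimensional ℂ ↥((Z ⊓ X) ⊔ (Z ⊓ Y)) :=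
        Submodule.finiteDimensional_of_le (sup_le inf_le_left inf_le_left)
      have hfr := Submodule.finrank_lt_finrank_of_lt hlt
      rw [hZXdim] at hfr
      have hsup : (Z ⊓ X) ⊔ (Z ⊓ Y) = Z :=
        Submodule.eq_of_le_of_finrank_le (sup_le inf_le_left inf_le_left)
          (by rw [hZdim]; omega)
      apply hZnle
      rw [← hsup]
      exact sup_le (inf_le_right.trans le_sup_left) (inf_le_right.trans le_sup_right)
    -- `Z ⊓ X = X ⊓ Y`
    have hW : Z ⊓ X = X ⊓ Y := by
      apply Submodule.eq_of_le_of_finrank_eq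
      · refine le_inf inf_le_right ?_
        rw [hXYeq]; exact inf_le_right
      · rw [hZXdim, hXY.2]
    -- the orthogonal line
    have hPdim : Module.finrank ℂ ↥(Z ⊓ Xᗮ) = 1 := by
      have hsum := Submodule.finrank_sup_add_finrank_inf_eq (Z ⊓ X) (Z ⊓ Xᗮ)
      have hbot : (Z ⊓ X) ⊓ (Z ⊓ Xᗮ) = ⊥ := by
        rw [eq_bot_iff]
        rintro v ⟨⟨-, hv1⟩, -, hv2⟩
        have hv : v ∈ X ⊓ Xᗮ := ⟨hv1, hv2⟩
        rwa [Submodule.inf_orthogonal_eq_bot] at hv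
      rw [hbot, ← h1, hZdim, hZXdim] at hsum
      simp only [finrank_bot, add_zero] at hsum
      omega
    have hPY : Z ⊓ Xᗮ ≤ Yᗮ := by
      rintro p ⟨hpZ, hpX⟩
      have hp2 : p ∈ (Z ⊓ Y) ⊔ (Z ⊓ Yᗮ) := by rw [← h2]; exact hpZ
      obtain ⟨w, hw, q, hq, rfl⟩ := Submodule.mem_sup.1 hp2
      have hwW : w ∈ X ⊓ Y := by rw [← hW, hXYeq]; exact hw
      have hwperp : w ∈ (X ⊓ Y)ᗮ := by
        have h3 : w = (w + q) - q := by abel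
        rw [h3]
        apply Submodule.sub_mem
        · exact Submodule.orthogonal_le inf_le_left hpX
        · exact Submodule.orthogonal_le inf_le_right hq.2
      have hw0 : w = 0 := by
        have hv : w ∈ (X ⊓ Y) ⊓ (X ⊓ Y)ᗮ := ⟨hwW, hwperp⟩
        rwa [Submodule.inf_orthogonal_eq_bot, Submodule.mem_bot] at hv
      rw [hw0, zero_add]
      exact hq.2
    refine ⟨Z ⊓ Xᗮ, ⟨inferInstance, hPdim⟩, ?_, ?_⟩
    · rw [← Submodule.inf_orthogonal]
      exact le_inf inf_le_right hPY
    · rw [← hW]; exact h1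
  · rintro ⟨P, ⟨hPfd, hPdim⟩, hPorth, rfl⟩
    haveI := hPfd
    have hPX : P ≤ Xᗮ := hPorth.trans (Submodule.orthogonal_le le_sup_left)
    have hPY : P ≤ Yᗮ := hPorth.trans (Submodule.orthogonal_le le_sup_right)
    constructor
    · refine orthoAdjacent_of_sup hXfd inf_le_left hPX ?_ hXY.2
      intro h; exact hZnle (h.le.trans le_sup_left)
    · refine orthoAdjacent_of_sup hYfd inf_le_right hPY ?_ ?_
      · intro h; exact hZnle (h.le.trans le_sup_right)
      · exact hXY.2

end
end

section
/- Let H be a complex Hilbert space and let k be an integer with 4 ≤ 2k ≤ dim H and k ≤ dim H − 4. If X, Y are non-compatible adjacent k-dimensional subspaces of H, then there are infinitely many k-dimensional subspaces Z of H ortho-adjacent to both X and Y and such that there are infinitely many k-dimensional subspaces Z' of H ortho-adjacent to each of X, Y and Z. -/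
noncomputable section

open scoped Classical

variable {H : Type*} [NormedAddCommGroup H] [InnerProductSpace ℂ H] [CompleteSpace H]

set_option linter.unusedSectionVars false

lemma projOn_eq (X : Submodule ℂ H) [h : Submodule.HasOrthogonalProjection X] :
    projOn X = X.subtypeL.comp (Submodule.orthogonalProjectionOnto X) := dif_pos h

open scoped InnerProductSpace in
lemma compat_of_le_orth (N X Z : Submodule ℂ H) [Submodule.HasOrthogonalProjection N]
    [Submodule.HasOrthogonalProjection X] [Submodule.HasOrthogonalProjection Z]
    (hNX : N ≤ X) (hNZ : N ≤ Z)
    (hperp : ∀ v ∈ Z, v - (Submodule.orthogonalProjectionOnto N v : H) ∈ Xᗮ) :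
    Compatible X Z := by
  have hA : ∀ v ∈ Z, (Submodule.orthogonalProjectionOnto X v : H) = Submodule.orthogonalProjectionOnto N v := by
    intro v hv
    exact Submodule.eq_starProjection_of_mem_orthogonal (hNX (Submodule.orthogonalProjectionOnto N v).2)
      (hperp v hv)
  unfold Compatible
  rw [projOn_eq, projOn_eq]
  ext h
  have hB : (Submodule.orthogonalProjectionOnto X (Submodule.orthogonalProjectionOnto Z h) : H)
      = (Submodule.orthogonalProjectionOnto N h : H) := by
    rw [hA _ (Submodule.orthogonalProjectionOnto Z h).2]
    exact congrArg _ (Submodule.orthogonalProjectionOnto_starProjection_of_le hNZ h)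
  have haN : (Submodule.orthogonalProjectionOnto X h : H) - Submodule.orthogonalProjectionOnto N h ∈ Nᗮ := by
    have := Submodule.sub_starProjection_mem_orthogonal (K := N)
      (X.starProjection h)
    rwa [Submodule.starProjection_apply N,
      Submodule.orthogonalProjectionOnto_starProjection_of_le hNX h] at this
  have haX : (Submodule.orthogonalProjectionOnto X h : H) - Submodule.orthogonalProjectionOnto N h ∈ X :=
    X.sub_mem (Submodule.orthogonalProjectionOnto X h).2 (hNX (Submodule.orthogonalProjectionOnto N h).2)
  have hC : (Submodule.orthogonalProjectionOnto Z (Submodule.orthogonalProjectionOnto X h) : H)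
      = (Submodule.orthogonalProjectionOnto N h : H) := by
    rw [← Submodule.starProjection_apply]
    apply Submodule.eq_starProjection_of_mem_orthogonal (hNZ (Submodule.orthogonalProjectionOnto N h).2)
    rw [Submodule.mem_orthogonal']
    intro w hw
    set a : H := (Submodule.orthogonalProjectionOnto X h : H) - Submodule.orthogonalProjectionOnto N h with ha
    have hw' : w = (Submodule.orthogonalProjectionOnto N w : H) + (w - Submodule.orthogonalProjectionOnto N w) := by abel
    rw [hw', inner_add_right]
    have h1 : ⟪a, (Submodule.orthogonalProjectionOnto N w : H)⟫_ℂ = 0 :=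
      (Submodule.mem_orthogonal' N a).1 haN _ (Submodule.orthogonalProjectionOnto N w).2
    have h2 : ⟪a, w - Submodule.orthogonalProjectionOnto N w⟫_ℂ = 0 :=
      (Submodule.mem_orthogonal X _).1 (hperp w hw) a haX
    rw [h1, h2, add_zero]
  simp only [ContinuousLinearMap.mul_apply, ContinuousLinearMap.comp_apply,
    Submodule.subtypeL_apply, ContinuousLinearMap.coe_comp', Function.comp_apply]
  rw [hB, hC]

lemma inf_aux (N X : Submodule ℂ H) (hNX : N ≤ X) (u : H) (hu : u ∈ Xᗮ) :
    (N ⊔ Submodule.span ℂ {u}) ⊓ X = N := by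
  apply le_antisymm
  · rintro z hz
    obtain ⟨hz1, hz2⟩ := Submodule.mem_inf.1 hz
    obtain ⟨n, hn, s, hs, rfl⟩ := Submodule.mem_sup.1 hz1
    obtain ⟨α, rfl⟩ := Submodule.mem_span_singleton.1 hs
    have hαu : α • u ∈ X := by
      have := X.sub_mem hz2 (hNX hn); simpa using this
    have h0 : α • u = 0 := by
      have : α • u ∈ X ⊓ Xᗮ := ⟨hαu, Xᗮ.smul_mem α hu⟩
      rwa [Submodule.inf_orthogonal_eq_bot, Submodule.mem_bot] at this
    rw [h0, add_zero]; exact hn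
  · exact le_inf le_sup_left hNX

lemma isDim_aux (k : ℕ) (hk : 1 ≤ k) (N : Submodule ℂ H) [FiniteDimensional ℂ N]
    (hNr : Module.finrank ℂ N = k - 1) (u : H) (huN : u ∈ Nᗮ) (hu0 : u ≠ 0) :
    IsDim k (N ⊔ Submodule.span ℂ {u}) := by
  haveI fd : FiniteDimensional ℂ ↥(N ⊔ Submodule.span ℂ {u}) :=
    Submodule.finiteDimensional_sup _ _
  refine ⟨fd, ?_⟩
  have hinf : N ⊓ Submodule.span ℂ {u} = ⊥ := by
    have : N ⊓ Submodule.span ℂ {u} ≤ N ⊓ Nᗮ := by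
      refine inf_le_inf_left N ?_
      rw [Submodule.span_le, Set.singleton_subset_iff]; exact huN
    rw [Submodule.inf_orthogonal_eq_bot] at this
    exact le_bot_iff.1 this
  have heq := Submodule.finrank_sup_add_finrank_inf_eq N (Submodule.span ℂ {u})
  rw [hinf, finrank_bot, finrank_span_singleton hu0, hNr] at heq
  omega

lemma orthoAdjacent_aux (k : ℕ) (N X : Submodule ℂ H) [FiniteDimensional ℂ N]
    [FiniteDimensional ℂ X] (hNr : Module.finrank ℂ N = k - 1) (hNX : N ≤ X)
    (u : H) (huX : u ∈ Xᗮ) (hu0 : u ≠ 0) :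
    OrthoAdjacent k (N ⊔ Submodule.span ℂ {u}) X := by
  haveI : FiniteDimensional ℂ ↥(N ⊔ Submodule.span ℂ {u}) :=
    Submodule.finiteDimensional_sup _ _
  have huZ : u ∈ N ⊔ Submodule.span ℂ {u} :=
    (le_sup_right : Submodule.span ℂ {u} ≤ _) (Submodule.mem_span_singleton_self u)
  constructor
  · constructor
    · intro hEq
      have huX' : u ∈ X := hEq ▸ huZ
      have : u ∈ X ⊓ Xᗮ := ⟨huX', huX⟩
      rw [Submodule.inf_orthogonal_eq_bot, Submodule.mem_bot] at this
      exact hu0 this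
    · rw [inf_aux N X hNX u huX]; exact hNr
  · have hc : Compatible X (N ⊔ Submodule.span ℂ {u}) := by
      refine compat_of_le_orth N X _ hNX le_sup_left ?_
      intro v hv
      obtain ⟨n, hn, s, hs, rfl⟩ := Submodule.mem_sup.1 hv
      obtain ⟨α, rfl⟩ := Submodule.mem_span_singleton.1 hs
      have huN : u ∈ Nᗮ := Submodule.orthogonal_le hNX huX
      have hPn : (Submodule.orthogonalProjectionOnto N n : H) = n := Submodule.starProjection_eq_self_iff.2 hn
      have hPu : (Submodule.orthogonalProjectionOnto N (α • u) : H) = 0 := by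
        rw [Submodule.orthogonalProjectionOnto_apply_of_mem_orthogonal
          (Nᗮ.smul_mem α huN)]
        rfl
      rw [map_add, Submodule.coe_add, hPn, hPu, add_zero, add_sub_cancel_left]
      exact Xᗮ.smul_mem α huX
    unfold Compatible at hc ⊢
    exact hc.symm

lemma exists_pair_orth (F : Submodule ℂ H) [FiniteDimensional ℂ F]
    (h : (Module.finrank ℂ F : Cardinal) + 2 ≤ Module.rank ℂ H) :
    ∃ u v : H, u ∈ Fᗮ ∧ v ∈ Fᗮ ∧ ∀ s t : ℂ, s • u + t • v = 0 → s = 0 ∧ t = 0 := by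
  have hcompl : IsCompl F Fᗮ := Submodule.isCompl_orthogonal_of_hasOrthogonalProjection
  have hsum : Module.rank ℂ F + Module.rank ℂ Fᗮ = Module.rank ℂ H := by
    have h1 := Submodule.rank_sup_add_rank_inf_eq F Fᗮ
    rw [hcompl.sup_eq_top, hcompl.inf_eq_bot, rank_top, rank_bot, add_zero] at h1
    exact h1.symm
  have hFr : (Module.finrank ℂ F : Cardinal) = Module.rank ℂ F := Module.finrank_eq_rank ℂ ↥F
  have hne : Fᗮ ≠ ⊥ := by
    intro hb
    rw [hb, rank_bot, add_zero, ← hFr] at hsum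
    rw [← hsum] at h
    have h' : Module.finrank ℂ F + 2 ≤ Module.finrank ℂ F := by exact_mod_cast h
    omega
  obtain ⟨u, huF, hu0⟩ := (Submodule.ne_bot_iff Fᗮ).1 hne
  have hnle : ¬ (Fᗮ ≤ Submodule.span ℂ {u}) := by
    intro hle
    have h1 : Module.rank ℂ Fᗮ ≤ 1 := by
      refine le_trans (Submodule.rank_mono hle) ?_
      refine le_trans (rank_span_le ({u} : Set H)) ?_
      simp
    have h2 : Module.rank ℂ H ≤ (Module.finrank ℂ F : Cardinal) + 1 := by
      rw [← hsum, hFr]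
      exact add_le_add_right h1 _
    have h3 := h.trans h2
    have h4 : Module.finrank ℂ F + 2 ≤ Module.finrank ℂ F + 1 := by exact_mod_cast h3
    omega
  obtain ⟨v, hvF, hvs⟩ := SetLike.not_le_iff_exists.1 hnle
  refine ⟨u, v, huF, hvF, ?_⟩
  intro s t hst
  by_cases ht : t = 0
  · subst ht
    rw [zero_smul, add_zero] at hst
    rcases smul_eq_zero.1 hst with hs | hu
    · exact ⟨hs, rfl⟩
    · exact absurd hu hu0
  · exfalso
    apply hvs
    rw [Submodule.mem_span_singleton]
    refine ⟨-(s / t), ?_⟩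
    have h0 : t • v = -(s • u) := eq_neg_of_add_eq_zero_left (by rw [add_comm] at hst; exact hst)
    have h1 : v = t⁻¹ • (t • v) := by rw [smul_smul, inv_mul_cancel₀ ht, one_smul]
    rw [h0, smul_neg, smul_smul] at h1
    rw [h1, neg_smul, div_eq_inv_mul]

lemma span_sup_injective (N X' : Submodule ℂ H) (w₁ w₂ : H)
    (hw₁ : w₁ ∈ X'ᗮ) (hw₂ : w₂ ∈ X'ᗮ) (hN : N ≤ X')
    (hind : ∀ s t : ℂ, s • w₁ + t • w₂ = 0 → s = 0 ∧ t = 0) :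
    Function.Injective (fun c : ℂ => N ⊔ Submodule.span ℂ {w₁ + c • w₂}) := by
  intro c d hcd
  simp only at hcd
  have hmem : w₁ + c • w₂ ∈ N ⊔ Submodule.span ℂ {w₁ + d • w₂} := by
    rw [← hcd]
    exact (le_sup_right : Submodule.span ℂ {w₁ + c • w₂} ≤ _)
      (Submodule.mem_span_singleton_self _)
  obtain ⟨n, hn, s, hs, heq⟩ := Submodule.mem_sup.1 hmem
  obtain ⟨α, rfl⟩ := Submodule.mem_span_singleton.1 hs
  have hn' : n = (1 - α) • w₁ + (c - α * d) • w₂ := by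
    have h2 : n = (w₁ + c • w₂) - α • (w₁ + d • w₂) := eq_sub_of_add_eq heq
    rw [h2]
    module
  have hnperp : n ∈ X'ᗮ := by
    rw [hn']
    exact X'ᗮ.add_mem (X'ᗮ.smul_mem _ hw₁) (X'ᗮ.smul_mem _ hw₂)
  have hn0 : n = 0 := by
    have : n ∈ X' ⊓ X'ᗮ := ⟨hN hn, hnperp⟩
    rwa [Submodule.inf_orthogonal_eq_bot, Submodule.mem_bot] at this
  obtain ⟨hα, hcd'⟩ := hind (1 - α) (c - α * d) (by rw [← hn', hn0])
  have hα1 : α = 1 := by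
    have := sub_eq_zero.1 hα; exact this.symm
  rw [hα1, one_mul] at hcd'
  exact sub_eq_zero.1 hcd'

/-- Suppose `4 ≤ 2k ≤ dim H` and `k ≤ dim H - 4`. If `X, Y` are non-compatible adjacent
`k`-dimensional subspaces of `H`, then there are infinitely many `k`-dimensional subspaces
`Z` ortho-adjacent to both `X, Y` and such that there are infinitely many `k`-dimensional
subspaces `Z'` ortho-adjacent to each of `X, Y, Z`. -/
theorem infinite_common_neighbours_with_infinite
    (k : ℕ) (hk : 2 ≤ k) (h2k : 2 * (k : Cardinal) ≤ Module.rank ℂ H)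
    (hk4 : (k : Cardinal) + 4 ≤ Module.rank ℂ H)
    (X Y : Submodule ℂ H) (hX : IsDim k X) (hY : IsDim k Y)
    (hadj : AdjacentSub k X Y) (hnc : ¬ Compatible X Y) :
    {Z : Submodule ℂ H | IsDim k Z ∧ OrthoAdjacent k Z X ∧ OrthoAdjacent k Z Y ∧
      {Z' : Submodule ℂ H | IsDim k Z' ∧ OrthoAdjacent k Z' X ∧ OrthoAdjacent k Z' Y ∧
        OrthoAdjacent k Z' Z}.Infinite}.Infinite := by
  obtain ⟨hXfd, hXr⟩ := hX
  obtain ⟨hYfd, hYr⟩ := hY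
  obtain ⟨hne, hNr⟩ := hadj
  haveI := hXfd; haveI := hYfd
  haveI : FiniteDimensional ℂ ↥(X ⊓ Y) := Submodule.finiteDimensional_of_le inf_le_left
  haveI : FiniteDimensional ℂ ↥(X ⊔ Y) := Submodule.finiteDimensional_sup X Y
  have hNX : X ⊓ Y ≤ X := inf_le_left
  have hNY : X ⊓ Y ≤ Y := inf_le_right
  have hXF : X ≤ X ⊔ Y := le_sup_left
  have hYF : Y ≤ X ⊔ Y := le_sup_right
  have hNF : X ⊓ Y ≤ X ⊔ Y := le_trans hNX hXF
  have hFr : Module.finrank ℂ ↥(X ⊔ Y) = k + 1 := by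
    have h1 := Submodule.finrank_sup_add_finrank_inf_eq X Y
    rw [hXr, hYr, hNr] at h1
    omega
  obtain ⟨u₁, u₂, hu₁, hu₂, hind⟩ := exists_pair_orth (X ⊔ Y) (by
    rw [hFr]
    refine le_trans ?_ hk4
    push_cast
    have h34 : (3 : Cardinal) ≤ 4 := by norm_num
    calc (k : Cardinal) + 1 + 2 = (k : Cardinal) + 3 := by ring
      _ ≤ (k : Cardinal) + 4 := add_le_add_right h34 _)
  refine Set.infinite_of_injective_forall_mem
    (span_sup_injective (X ⊓ Y) (X ⊔ Y) u₁ u₂ hu₁ hu₂ hNF hind) ?_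
  intro c
  set u : H := u₁ + c • u₂ with hu
  have hucF : u ∈ (X ⊔ Y)ᗮ := (X ⊔ Y)ᗮ.add_mem hu₁ ((X ⊔ Y)ᗮ.smul_mem c hu₂)
  have huc0 : u ≠ 0 := by
    intro h0
    have h1 := hind 1 c (by rw [one_smul]; exact h0)
    exact one_ne_zero h1.1
  have hucX : u ∈ Xᗮ := Submodule.orthogonal_le hXF hucF
  have hucY : u ∈ Yᗮ := Submodule.orthogonal_le hYF hucF
  have hucN : u ∈ (X ⊓ Y)ᗮ := Submodule.orthogonal_le hNF hucF
  set Z : Submodule ℂ H := X ⊓ Y ⊔ Submodule.span ℂ {u} with hZ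
  haveI : FiniteDimensional ℂ ↥Z := Submodule.finiteDimensional_sup _ _
  have hZdim : IsDim k Z := isDim_aux k (by omega) (X ⊓ Y) hNr u hucN huc0
  refine ⟨hZdim, orthoAdjacent_aux k (X ⊓ Y) X hNr hNX u hucX huc0,
    orthoAdjacent_aux k (X ⊓ Y) Y hNr hNY u hucY huc0, ?_⟩
  -- inner infinitude
  set G : Submodule ℂ H := (X ⊔ Y) ⊔ Submodule.span ℂ {u} with hG
  haveI : FiniteDimensional ℂ ↥G := Submodule.finiteDimensional_sup _ _
  have hGr : Module.finrank ℂ ↥G ≤ k + 2 := by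
    have h1 := Submodule.finrank_sup_add_finrank_inf_eq (X ⊔ Y) (Submodule.span ℂ {u})
    rw [finrank_span_singleton huc0, hFr, ← hG] at h1
    omega
  have hZG : Z ≤ G := sup_le_sup_right hNF _
  have hXG : X ≤ G := le_trans hXF le_sup_left
  have hYG : Y ≤ G := le_trans hYF le_sup_left
  have hNG : X ⊓ Y ≤ G := le_trans hNF le_sup_left
  obtain ⟨v₁, v₂, hv₁, hv₂, hindv⟩ := exists_pair_orth G (by
    refine le_trans ?_ hk4
    have h1 : (Module.finrank ℂ ↥G : Cardinal) ≤ ((k + 2 : ℕ) : Cardinal) := by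
      exact_mod_cast hGr
    calc (Module.finrank ℂ ↥G : Cardinal) + 2 ≤ ((k + 2 : ℕ) : Cardinal) + 2 :=
          add_le_add_left h1 2
      _ = (k : Cardinal) + 4 := by push_cast; ring)
  refine Set.infinite_of_injective_forall_mem
    (span_sup_injective (X ⊓ Y) G v₁ v₂ hv₁ hv₂ hNG hindv) ?_
  intro d
  set v : H := v₁ + d • v₂ with hv
  have hvG : v ∈ Gᗮ := Gᗮ.add_mem hv₁ (Gᗮ.smul_mem d hv₂)
  have hv0 : v ≠ 0 := by
    intro h0
    have h1 := hindv 1 d (by rw [one_smul]; exact h0)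
    exact one_ne_zero h1.1
  have hvX : v ∈ Xᗮ := Submodule.orthogonal_le hXG hvG
  have hvY : v ∈ Yᗮ := Submodule.orthogonal_le hYG hvG
  have hvZ : v ∈ Zᗮ := Submodule.orthogonal_le hZG hvG
  have hvN : v ∈ (X ⊓ Y)ᗮ := Submodule.orthogonal_le hNG hvG
  have hNZ : X ⊓ Y ≤ Z := le_sup_left
  exact ⟨isDim_aux k (by omega) (X ⊓ Y) hNr v hvN hv0,
    orthoAdjacent_aux k (X ⊓ Y) X hNr hNX v hvX hv0,
    orthoAdjacent_aux k (X ⊓ Y) Y hNr hNY v hvY hv0,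
    orthoAdjacent_aux k (X ⊓ Y) Z hNr hNZ v hvZ hv0⟩


end
end

section
/- Let H be a complex Hilbert space, let G(σ,d) be the conjugacy class of finite-rank self-adjoint operators with spectrum σ = {a_1, ..., a_k} and eigenspace dimensions d = {n_1, ..., n_k}, and let A, B ∈ G(σ,d) be operators that are not commutatively adjacent and such that, for two distinct indices i, j, the a_t-eigenspaces of A and B coincide for every t ≠ i, j while the a_i-eigenspaces of A and B are distinct and the a_j-eigenspaces of A and B are distinct. Then every C ∈ G(σ,d) that is commutatively adjacent to both A and B is commutatively (i,j)-adjacent to A and commutatively (i,j)-adjacent to B. -/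
noncomputable section

open scoped Classical ComplexInnerProductSpace

variable {H : Type*} [NormedAddCommGroup H] [InnerProductSpace ℂ H] [CompleteSpace H]

/-- The eigenspace of a bounded operator `A` for a real eigenvalue `μ`. -/
def eigSp (A : H →L[ℂ] H) (μ : ℝ) : Submodule ℂ H :=
  Module.End.eigenspace (A : H →ₗ[ℂ] H) (μ : ℂ)

/-- `A` belongs to the `(σ, d)`-Grassmannian `G(σ, d)`: `A` is a bounded self-adjoint
finite-rank operator whose eigenspace for the eigenvalue `a i` has dimension `n i`, these
eigenspaces being mutually orthogonal with sum dense in `H`. -/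
def MemClass (k : ℕ) (a : Fin k → ℝ) (n : Fin k → Cardinal) (A : H →L[ℂ] H) : Prop :=
  IsSelfAdjoint A ∧ FiniteDimensional ℂ ↥(LinearMap.range (A : H →ₗ[ℂ] H)) ∧
  (∀ i, Module.rank ℂ ↥(eigSp A (a i)) = n i) ∧
  (∀ i j : Fin k, i ≠ j → eigSp A (a i) ⟂ eigSp A (a j)) ∧
  (⨆ i, eigSp A (a i)).topologicalClosure = ⊤

/-- `A` and `B` are commutatively adjacent: they commute and `rank (A - B) = 2`. -/
def CommAdj (A B : H →L[ℂ] H) : Prop :=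
  Commute A B ∧ Module.rank ℂ ↥(LinearMap.range ((A - B : H →L[ℂ] H) : H →ₗ[ℂ] H)) = 2

/-- The graph `Γ^c(σ, d)` on the conjugacy class `G(σ, d)`: two operators are connected by an
edge if they are commutatively adjacent. -/
def commGraph (H : Type*) [NormedAddCommGroup H] [InnerProductSpace ℂ H] [CompleteSpace H]
    (k : ℕ) (a : Fin k → ℝ) (n : Fin k → Cardinal) :
    SimpleGraph {A : H →L[ℂ] H // MemClass k a n A} where
  Adj A B := A ≠ B ∧ CommAdj A.1 B.1
  symm := ⟨by
    rintro A B ⟨hne, hc, hr⟩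
    refine ⟨hne.symm, hc.symm, ?_⟩
    have h : ((B.1 - A.1 : H →L[ℂ] H) : H →ₗ[ℂ] H) = -((A.1 - B.1 : H →L[ℂ] H) : H →ₗ[ℂ] H) := by
      ext x; simp
    rw [h, LinearMap.range_neg]
    exact hr⟩
  loopless := ⟨fun A h => h.1 rfl⟩

/-- `A` and `B` are `(i, j)`-adjacent: their `a t`-eigenspaces coincide for every `t ≠ i, j`,
and their `a i`-eigenspaces (and likewise their `a j`-eigenspaces) are adjacent, i.e. the
intersection of the `a i`-eigenspaces has dimension `n i - 1`. -/
def IJAdj (k : ℕ) (a : Fin k → ℝ) (n : Fin k → Cardinal) (i j : Fin k)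
    (A B : H →L[ℂ] H) : Prop :=
  (∀ t, t ≠ i → t ≠ j → eigSp A (a t) = eigSp B (a t)) ∧
  Module.rank ℂ ↥(eigSp A (a i) ⊓ eigSp B (a i)) + 1 = n i ∧
  Module.rank ℂ ↥(eigSp A (a j) ⊓ eigSp B (a j)) + 1 = n j

/-- `A` and `B` are commutatively `(i, j)`-adjacent: they are `(i, j)`-adjacent and commute. -/
def CommIJAdj (k : ℕ) (a : Fin k → ℝ) (n : Fin k → Cardinal) (i j : Fin k)
    (A B : H →L[ℂ] H) : Prop :=
  Commute A B ∧ IJAdj k a n i j A B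

lemma mem_eigSp {A : H →L[ℂ] H} {μ : ℝ} {x : H} : x ∈ eigSp A μ ↔ A x = (μ : ℂ) • x :=
  Module.End.mem_eigenspace_iff

lemma eigSp_isClosed (A : H →L[ℂ] H) (μ : ℝ) : IsClosed ((eigSp A μ : Submodule ℂ H) : Set H) := by
  have h : eigSp A μ = LinearMap.ker ((A - (μ : ℂ) • (1 : H →L[ℂ] H) : H →L[ℂ] H) : H →ₗ[ℂ] H) := by
    ext x
    simp [mem_eigSp, LinearMap.mem_ker, sub_eq_zero]
  rw [h]
  exact ContinuousLinearMap.isClosed_ker _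

lemma eigSp_mapsTo {A C : H →L[ℂ] H} (h : Commute A C) (μ : ℝ) {x : H}
    (hx : x ∈ eigSp C μ) : A x ∈ eigSp C μ := by
  rw [mem_eigSp] at hx ⊢
  have := congrArg (fun f : H →L[ℂ] H => f x) h
  simp only [ContinuousLinearMap.mul_apply] at this
  rw [← this, hx, map_smul]

-- sup of two orthogonal closed submodules is closed
lemma isClosed_sup_of_ortho {U V : Submodule ℂ H} (hU : IsClosed (U : Set H))
    (hV : IsClosed (V : Set H)) (h : U ⟂ V) : IsClosed ((U ⊔ V : Submodule ℂ H) : Set H) := by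
  haveI : CompleteSpace U := hU.completeSpace_coe
  have key : ∀ x ∈ closure ((U ⊔ V : Submodule ℂ H) : Set H), x ∈ (U ⊔ V : Submodule ℂ H) := by
    intro x hx
    have hmem : x - (U.subtypeL.comp (U.orthogonalProjectionOnto)) x ∈ V := by
      have hcl : IsClosed {y : H | y - (U.subtypeL.comp (U.orthogonalProjectionOnto)) y ∈ V} := by
        have : {y : H | y - (U.subtypeL.comp (U.orthogonalProjectionOnto)) y ∈ V} =
            (fun y : H => y - (U.subtypeL.comp (U.orthogonalProjectionOnto)) y) ⁻¹' (V : Set H) := rfl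
        rw [this]
        exact hV.preimage (continuous_id.sub (U.subtypeL.comp (U.orthogonalProjectionOnto)).continuous)
      refine closure_minimal ?_ hcl hx
      rintro y hy
      rcases Submodule.mem_sup.1 hy with ⟨u, hu, v, hv, rfl⟩
      have h1 : (U.orthogonalProjectionOnto u : H) = u := Submodule.starProjection_eq_self_iff.2 hu
      have h2 : U.orthogonalProjectionOnto v = 0 :=
        Submodule.orthogonalProjectionOnto_apply_of_mem_orthogonal (h.symm.le hv)
      simp only [Set.mem_setOf_eq, ContinuousLinearMap.comp_apply, map_add, h2, add_zero,
        Submodule.subtypeL_apply]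
      rw [h1]
      simpa using hv
    have : x = ((U.subtypeL.comp (U.orthogonalProjectionOnto)) x) + (x - (U.subtypeL.comp (U.orthogonalProjectionOnto)) x) := by abel
    rw [this]
    exact Submodule.add_mem_sup (by simp) hmem
  exact isClosed_of_closure_subset key

lemma isClosed_iSup_of_ortho {ι : Type*} [Fintype ι] {Y : ι → Submodule ℂ H}
    (hcl : ∀ i, IsClosed ((Y i : Submodule ℂ H) : Set H))
    (horth : ∀ i j, i ≠ j → Y i ⟂ Y j) :
    IsClosed ((⨆ i, Y i : Submodule ℂ H) : Set H) := by
  classical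
  have key : ∀ s : Finset ι, IsClosed ((⨆ i ∈ s, Y i : Submodule ℂ H) : Set H) := by
    intro s
    induction s using Finset.induction_on with
    | empty => simp only [Finset.notMem_empty, iSup_false, iSup_bot, Submodule.bot_coe]
               exact isClosed_singleton
    | @insert a s ha ih =>
        rw [Finset.iSup_insert]
        refine isClosed_sup_of_ortho (hcl a) ih ?_
        rw [Submodule.isOrtho_iSup_right]
        intro i
        rw [Submodule.isOrtho_iSup_right]
        intro hi
        exact horth a i (fun h => ha (h ▸ hi))
  have := key Finset.univ
  simpa using this

lemma iSup_eq_top_of_dense {ι : Type*} [Fintype ι] {Y : ι → Submodule ℂ H}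
    (hcl : ∀ i, IsClosed ((Y i : Submodule ℂ H) : Set H))
    (horth : ∀ i j, i ≠ j → Y i ⟂ Y j)
    (hd : (⨆ i, Y i).topologicalClosure = ⊤) : (⨆ i, Y i) = ⊤ := by
  rw [← (isClosed_iSup_of_ortho hcl horth).submodule_topologicalClosure_eq]
  exact hd

lemma orth_sum_eq_zero {ι : Type*} [Fintype ι] {Y : ι → Submodule ℂ H}
    (horth : ∀ i j, i ≠ j → Y i ⟂ Y j) (z : ι → H) (hz : ∀ i, z i ∈ Y i)
    (hsum : ∑ i, z i = 0) : ∀ i, z i = 0 := by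
  intro r
  have h0 : (0 : ℂ) = ∑ i, ⟪z r, z i⟫ := by
    rw [← inner_sum, hsum, inner_zero_right]
  have : ∑ i, ⟪z r, z i⟫ = ⟪z r, z r⟫ := by
    rw [Finset.sum_eq_single r]
    · intro i _ hi
      exact Submodule.IsOrtho.inner_eq (horth r i (fun h => hi h.symm)) (hz r) (hz i)
    · intro h; exact absurd (Finset.mem_univ r) h
  rw [this] at h0
  exact inner_self_eq_zero.1 h0.symm

lemma mem_iSup_fintype {ι : Type*} [Fintype ι] (Y : ι → Submodule ℂ H) {x : H}
    (hx : x ∈ ⨆ i, Y i) : ∃ z : ι → H, (∀ i, z i ∈ Y i) ∧ ∑ i, z i = x := by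
  classical
  rw [Submodule.mem_iSup_iff_exists_finsupp] at hx
  obtain ⟨f, hf, hsum⟩ := hx
  refine ⟨fun i => f i, hf, ?_⟩
  rw [← hsum, Finsupp.sum_fintype]
  intro i; rfl

lemma eigSp_decomp {k : ℕ} {a : Fin k → ℝ} {A C : H →L[ℂ] H}
    (horth : ∀ i j : Fin k, i ≠ j → eigSp C (a i) ⟂ eigSp C (a j))
    (hd : (⨆ i, eigSp C (a i)).topologicalClosure = ⊤)
    (hcomm : Commute A C) (μ : ℝ) :
    eigSp A μ = ⨆ t, (eigSp A μ ⊓ eigSp C (a t)) := by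
  refine le_antisymm ?_ (iSup_le fun t => inf_le_left)
  intro x hx
  have htop : (⨆ t, eigSp C (a t)) = ⊤ :=
    iSup_eq_top_of_dense (fun t => eigSp_isClosed C (a t)) horth hd
  have hxmem : x ∈ ⨆ t, eigSp C (a t) := htop.symm ▸ Submodule.mem_top
  obtain ⟨z, hz, hsum⟩ := mem_iSup_fintype _ hxmem
  have hzero : ∀ t, A (z t) - (μ : ℂ) • z t = 0 := by
    refine orth_sum_eq_zero horth (fun t => A (z t) - (μ : ℂ) • z t)
      (fun t => Submodule.sub_mem _ (eigSp_mapsTo hcomm _ (hz t)) (Submodule.smul_mem _ _ (hz t))) ?_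
    rw [Finset.sum_sub_distrib, ← map_sum, ← Finset.smul_sum, hsum, mem_eigSp.1 hx, sub_self]
  have hzA : ∀ t, z t ∈ eigSp A μ := fun t => mem_eigSp.2 (sub_eq_zero.1 (hzero t))
  rw [← hsum]
  exact Submodule.sum_mem _ fun t _ =>
    Submodule.mem_iSup_of_mem t ⟨hzA t, hz t⟩

lemma rank_iSup_of_ortho {ι : Type*} [Fintype ι] (Y : ι → Submodule ℂ H)
    (horth : ∀ i j, i ≠ j → Y i ⟂ Y j) :
    Module.rank ℂ ↥(⨆ i, Y i) = ∑ i, Module.rank ℂ ↥(Y i) := by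
  classical
  have key : ∀ s : Finset ι, Module.rank ℂ ↥(⨆ i ∈ s, Y i) = ∑ i ∈ s, Module.rank ℂ ↥(Y i) := by
    intro s
    induction s using Finset.induction_on with
    | empty => simp
    | @insert a s ha ih =>
        rw [Finset.iSup_insert, Finset.sum_insert ha, ← ih]
        have hdisj : Y a ⊓ (⨆ i ∈ s, Y i) = ⊥ := by
          rw [← disjoint_iff]
          refine Submodule.IsOrtho.disjoint ?_
          rw [Submodule.isOrtho_iSup_right]
          intro i
          rw [Submodule.isOrtho_iSup_right]
          intro hi
          exact horth a i (fun h => ha (h ▸ hi))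
        have := Submodule.rank_sup_add_rank_inf_eq (Y a) (⨆ i ∈ s, Y i)
        rw [hdisj] at this
        simpa using this
  rw [show (⨆ i, Y i) = ⨆ i ∈ Finset.univ, Y i by simp]
  exact key Finset.univ

lemma eigSp_le_range {A : H →L[ℂ] H} {μ : ℝ} (hμ : μ ≠ 0) :
    eigSp A μ ≤ LinearMap.range (A : H →ₗ[ℂ] H) := by
  intro x hx
  refine ⟨(μ : ℂ)⁻¹ • x, ?_⟩
  have : (A : H →ₗ[ℂ] H) x = (μ : ℂ) • x := mem_eigSp.1 hx
  rw [map_smul, this, smul_smul, inv_mul_cancel₀ (by exact_mod_cast hμ), one_smul]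

lemma inf_eq_bot_of_ortho {U V : Submodule ℂ H} (h : U ⟂ V) : U ⊓ V = ⊥ := by
  rw [← disjoint_iff]; exact h.disjoint

lemma sum_eq_two_cases {ι : Type*} [Fintype ι] [DecidableEq ι] (m : ι → ℕ)
    (h : ∑ i, m i = 2) :
    (∃ u, m u = 2 ∧ ∀ v, v ≠ u → m v = 0) ∨
    (∃ u v, u ≠ v ∧ m u = 1 ∧ m v = 1 ∧ ∀ w, w ≠ u → w ≠ v → m w = 0) := by
  have hex : ∃ u, m u ≠ 0 := by
    by_contra hall
    push_neg at hall
    rw [Finset.sum_eq_zero (fun i _ => hall i)] at h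
    omega
  obtain ⟨u, hu⟩ := hex
  have hsplit : m u + ∑ i ∈ Finset.univ.erase u, m i = 2 := by
    rw [Finset.add_sum_erase _ _ (Finset.mem_univ u)]; exact h
  by_cases h2 : m u = 2
  · left
    refine ⟨u, h2, fun v hv => ?_⟩
    have : ∑ i ∈ Finset.univ.erase u, m i = 0 := by omega
    exact Finset.sum_eq_zero_iff.1 this v (Finset.mem_erase.2 ⟨hv, Finset.mem_univ v⟩)
  · have h1 : m u = 1 := by omega
    have hrest : ∑ i ∈ Finset.univ.erase u, m i = 1 := by omega
    have hex2 : ∃ v ∈ Finset.univ.erase u, m v ≠ 0 := by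
      by_contra hall
      push_neg at hall
      rw [Finset.sum_eq_zero hall] at hrest
      omega
    obtain ⟨v, hv, hv0⟩ := hex2
    have hsplit2 : m v + ∑ i ∈ (Finset.univ.erase u).erase v, m i = 1 := by
      rw [Finset.add_sum_erase _ _ hv]; exact hrest
    have hv1 : m v = 1 := by omega
    have hz : ∑ i ∈ (Finset.univ.erase u).erase v, m i = 0 := by omega
    right
    refine ⟨u, v, fun e => (Finset.mem_erase.1 hv).1 e.symm, h1, hv1, fun w hwu hwv => ?_⟩
    exact Finset.sum_eq_zero_iff.1 hz w
      (Finset.mem_erase.2 ⟨hwv, Finset.mem_erase.2 ⟨hwu, Finset.mem_univ w⟩⟩)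



lemma adj_structure {k : ℕ} {a : Fin k → ℝ} (ha : Function.Injective a) {n : Fin k → Cardinal}
    {C A : H →L[ℂ] H} (hC : MemClass k a n C) (hA : MemClass k a n A)
    (hCA : CommAdj C A) :
    ∃ p q : Fin k, p ≠ q ∧
      (∀ t, t ≠ p → t ≠ q → eigSp C (a t) = eigSp A (a t)) ∧
      (∀ s t, s ≠ t → ¬(s = p ∧ t = q) → ¬(s = q ∧ t = p) →
        eigSp C (a s) ⊓ eigSp A (a t) = ⊥) ∧
      eigSp C (a p) ⊓ eigSp A (a q) ≠ ⊥ ∧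
      eigSp C (a q) ⊓ eigSp A (a p) ≠ ⊥ ∧
      Module.rank ℂ ↥(eigSp C (a p) ⊓ eigSp A (a p)) + 1 = n p ∧
      Module.rank ℂ ↥(eigSp C (a q) ⊓ eigSp A (a q)) + 1 = n q := by
  classical
  obtain ⟨hcomm, hrank⟩ := hCA
  set X : Fin k → Submodule ℂ H := fun s => eigSp C (a s) with hXdef
  set Y : Fin k → Submodule ℂ H := fun t => eigSp A (a t) with hYdef
  set D : Fin k → Fin k → Submodule ℂ H := fun s t => X s ⊓ Y t with hDdef
  have hXorth : ∀ s s', s ≠ s' → X s ⟂ X s' := hC.2.2.2.1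
  have hYorth : ∀ t t', t ≠ t' → Y t ⟂ Y t' := hA.2.2.2.1
  have hane : ∀ s t : Fin k, s ≠ t → a s ≠ a t := fun s t hst h => hst (ha h)
  -- row and column decompositions
  have hrowd : ∀ s, X s = ⨆ t, D s t :=
    fun s => eigSp_decomp (A := C) (C := A) hA.2.2.2.1 hA.2.2.2.2 hcomm (a s)
  have hcold : ∀ t, Y t = ⨆ s, D s t := by
    intro t
    have h := eigSp_decomp (A := A) (C := C) hC.2.2.2.1 hC.2.2.2.2 hcomm.symm (a t)
    calc Y t = ⨆ s, eigSp A (a t) ⊓ eigSp C (a s) := h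
      _ = ⨆ s, D s t := iSup_congr fun s => inf_comm _ _
  have hDorth : ∀ (s t s' t' : Fin k), (s, t) ≠ (s', t') → D s t ⟂ D s' t' := by
    intro s t s' t' hne
    by_cases hs : s = s'
    · subst hs
      have ht : t ≠ t' := fun h => hne (by rw [h])
      exact (hYorth t t' ht).mono inf_le_right inf_le_right
    · exact (hXorth s s' hs).mono inf_le_left inf_le_left
  have hrow : ∀ s, n s = ∑ t, Module.rank ℂ ↥(D s t) := by
    intro s
    rw [← hC.2.2.1 s]
    show Module.rank ℂ ↥(X s) = _
    rw [hrowd s]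
    exact rank_iSup_of_ortho _ (fun t t' h => hDorth s t s t' (by simp [h]))
  have hcol : ∀ t, n t = ∑ s, Module.rank ℂ ↥(D s t) := by
    intro t
    rw [← hA.2.2.1 t]
    show Module.rank ℂ ↥(Y t) = _
    rw [hcold t]
    exact rank_iSup_of_ortho _ (fun s s' h => hDorth s t s' t (by simp [h]))
  -- the supremum of the eigenspaces of C is everything
  have hXtop : (⨆ s, X s) = ⊤ :=
    iSup_eq_top_of_dense (fun s => eigSp_isClosed C (a s)) hXorth hC.2.2.2.2
  -- G: the off-diagonal pieces
  set G : Fin k × Fin k → Submodule ℂ H :=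
    fun p => if p.1 = p.2 then ⊥ else D p.1 p.2 with hGdef
  set W : Submodule ℂ H := LinearMap.range ((C - A : H →L[ℂ] H) : H →ₗ[ℂ] H) with hWdef
  have hCAx : ∀ (s t : Fin k) (x : H), x ∈ D s t →
      (C - A) x = ((a s : ℂ) - (a t : ℂ)) • x := by
    intro s t x hx
    have h1 : C x = (a s : ℂ) • x := mem_eigSp.1 hx.1
    have h2 : A x = (a t : ℂ) • x := mem_eigSp.1 hx.2
    rw [ContinuousLinearMap.sub_apply, h1, h2, sub_smul]
  have hsub : ∀ s t, s ≠ t → D s t ≤ W := by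
    intro s t hst x hx
    refine ⟨((a s : ℂ) - (a t : ℂ))⁻¹ • x, ?_⟩
    have hne : (a s : ℂ) - (a t : ℂ) ≠ 0 := by
      rw [sub_ne_zero]
      exact_mod_cast hane s t hst
    have hx' : (((a s : ℂ) - (a t : ℂ))⁻¹ • x) ∈ D s t :=
      Submodule.smul_mem _ _ hx
    show (C - A) (((a s : ℂ) - (a t : ℂ))⁻¹ • x) = x
    rw [hCAx s t _ hx', smul_smul, mul_inv_cancel₀ hne, one_smul]
  have hW_eq : W = ⨆ p, G p := by
    refine le_antisymm ?_ (iSup_le fun p => ?_)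
    · rintro x ⟨y, rfl⟩
      have hy : y ∈ ⨆ p : Fin k × Fin k, D p.1 p.2 := by
        have h2 : (⊤ : Submodule ℂ H) = ⨆ p : Fin k × Fin k, D p.1 p.2 := by
          rw [← hXtop]
          calc (⨆ s, X s) = ⨆ s, ⨆ t, D s t := iSup_congr hrowd
            _ = ⨆ p : Fin k × Fin k, D p.1 p.2 := iSup_prod' _
        rw [← h2]; trivial
      obtain ⟨z, hz, hsum⟩ := mem_iSup_fintype _ hy
      show (C - A) y ∈ _
      rw [← hsum, map_sum]
      refine Submodule.sum_mem _ fun p _ => ?_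
      refine Submodule.mem_iSup_of_mem p ?_
      by_cases hd : p.1 = p.2
      · have : (C - A) (z p) = 0 := by
          rw [hCAx p.1 p.2 _ (hz p), hd, sub_self, zero_smul]
        rw [this]
        exact Submodule.zero_mem _
      · have : (C - A) (z p) ∈ D p.1 p.2 := by
          rw [hCAx p.1 p.2 _ (hz p)]
          exact Submodule.smul_mem _ _ (hz p)
        simpa [hGdef, hd] using this
    · by_cases hd : p.1 = p.2
      · simp [hGdef, hd]
      · simpa [hGdef, hd] using hsub p.1 p.2 hd
  have hGorth : ∀ p p', p ≠ p' → G p ⟂ G p' := by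
    intro p p' hne
    by_cases h1 : p.1 = p.2
    · simp [hGdef, h1, Submodule.isOrtho_bot_left]
    · by_cases h2 : p'.1 = p'.2
      · simp [hGdef, h2, Submodule.isOrtho_bot_right]
      · simp only [hGdef, if_neg h1, if_neg h2]
        exact hDorth _ _ _ _ (by rwa [← Prod.mk.eta (p := p), ← Prod.mk.eta (p := p')] at hne)
  have hsum2 : ∑ p : Fin k × Fin k, Module.rank ℂ ↥(G p) = 2 := by
    rw [← rank_iSup_of_ortho _ hGorth, ← hW_eq]
    exact hrank
  -- each G p has finite rank
  have hGfin : ∀ p, Module.rank ℂ ↥(G p) < Cardinal.aleph0 := by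
    intro p
    refine lt_of_le_of_lt ?_ (lt_of_le_of_lt (le_of_eq hrank) ?_)
    · refine Submodule.rank_mono ?_
      rw [hW_eq]
      exact le_iSup _ p
    · exact Cardinal.nat_lt_aleph0 2
  set m : Fin k × Fin k → ℕ := fun p => (Module.rank ℂ ↥(G p)).toNat with hmdef
  have hmcast : ∀ p, (m p : Cardinal) = Module.rank ℂ ↥(G p) :=
    fun p => Cardinal.cast_toNat_of_lt_aleph0 (hGfin p)
  have hmsum : ∑ p, m p = 2 := by
    have h : ∑ p, ((m p : Cardinal)) = 2 := by
      rw [Finset.sum_congr rfl (fun p _ => hmcast p)]; exact hsum2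
    exact_mod_cast h
  have hmdiag : ∀ s, m (s, s) = 0 := by
    intro s
    have hG : G (s, s) = ⊥ := if_pos rfl
    simp [hmdef, hG]
  have hGoff : ∀ s t : Fin k, s ≠ t → G (s, t) = D s t := fun s t h => if_neg h
  have hoffrank : ∀ s t : Fin k, s ≠ t → Module.rank ℂ ↥(D s t) = (m (s, t) : Cardinal) := by
    intro s t h
    rw [hmcast (s, t), hGoff s t h]
  have hoffbot : ∀ s t : Fin k, s ≠ t → m (s, t) = 0 → D s t = ⊥ := by
    intro s t h h0
    refine Submodule.rank_eq_zero.1 ?_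
    rw [hoffrank s t h, h0, Nat.cast_zero]
  have hrow' : ∀ r, n r = Module.rank ℂ ↥(D r r) + ((∑ t, m (r, t) : ℕ) : Cardinal) := by
    intro r
    rw [hrow r, ← Finset.add_sum_erase _ _ (Finset.mem_univ r)]
    congr 1
    rw [show (∑ t, m (r, t)) = ∑ t ∈ Finset.univ.erase r, m (r, t) by
      rw [← Finset.add_sum_erase _ (fun t => m (r, t)) (Finset.mem_univ r), hmdiag r, zero_add]]
    rw [Nat.cast_sum]
    exact Finset.sum_congr rfl fun t ht =>
      hoffrank r t (fun h => (Finset.mem_erase.1 ht).1 h.symm)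
  have hcol' : ∀ r, n r = Module.rank ℂ ↥(D r r) + ((∑ s, m (s, r) : ℕ) : Cardinal) := by
    intro r
    rw [hcol r, ← Finset.add_sum_erase _ _ (Finset.mem_univ r)]
    congr 1
    rw [show (∑ s, m (s, r)) = ∑ s ∈ Finset.univ.erase r, m (s, r) by
      rw [← Finset.add_sum_erase _ (fun s => m (s, r)) (Finset.mem_univ r), hmdiag r, zero_add]]
    rw [Nat.cast_sum]
    exact Finset.sum_congr rfl fun s hs => hoffrank s r (Finset.mem_erase.1 hs).1
  have hbal : ∀ r, (∑ t, m (r, t)) ≠ (∑ s, m (s, r)) → a r = 0 := by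
    intro r hne
    by_contra ha0
    have hle : eigSp C (a r) ≤ LinearMap.range (C : H →ₗ[ℂ] H) := eigSp_le_range ha0
    have hfin : Module.rank ℂ ↥(D r r) < Cardinal.aleph0 := by
      haveI := hC.2.1
      have h1 : Module.rank ℂ ↥(LinearMap.range (C : H →ₗ[ℂ] H)) < Cardinal.aleph0 :=
        Module.rank_lt_aleph0 ℂ _
      exact lt_of_le_of_lt (Submodule.rank_mono (le_trans inf_le_left hle)) h1
    have h1 : Module.rank ℂ ↥(D r r) + ((∑ t, m (r, t) : ℕ) : Cardinal) =
        Module.rank ℂ ↥(D r r) + ((∑ s, m (s, r) : ℕ) : Cardinal) := by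
      rw [← hrow' r, ← hcol' r]
    have h2 := Cardinal.eq_of_add_eq_add_left h1 hfin
    exact hne (by exact_mod_cast h2)
  have huniq : ∀ r r', (∑ t, m (r, t)) ≠ (∑ s, m (s, r)) →
      (∑ t, m (r', t)) ≠ (∑ s, m (s, r')) → r = r' :=
    fun r r' h h' => ha ((hbal r h).trans (hbal r' h').symm)
  rcases sum_eq_two_cases m hmsum with ⟨u, hu2, hrest⟩ | ⟨u, v, huv, hu1, hv1, hrest⟩
  · -- impossible: a single off-diagonal piece of rank 2
    exfalso
    have hne : u.1 ≠ u.2 := by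
      intro h
      rw [← Prod.mk.eta (p := u), ← h] at hu2
      rw [hmdiag u.1] at hu2
      omega
    have hro1 : 2 ≤ ∑ t, m (u.1, t) := by
      calc 2 = m (u.1, u.2) := by rw [Prod.mk.eta]; omega
        _ ≤ ∑ t, m (u.1, t) :=
          Finset.single_le_sum (f := fun t => m (u.1, t)) (fun t _ => Nat.zero_le _)
            (Finset.mem_univ u.2)
    have hco1 : ∑ s, m (s, u.1) = 0 := by
      refine Finset.sum_eq_zero fun s _ => ?_
      by_cases h : s = u.1
      · rw [h]; exact hmdiag u.1
      · exact hrest _ fun hh => hne (congrArg Prod.snd hh)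
    have hro2 : ∑ t, m (u.2, t) = 0 := by
      refine Finset.sum_eq_zero fun t _ => ?_
      by_cases h : t = u.2
      · rw [h]; exact hmdiag u.2
      · exact hrest _ fun hh => hne (congrArg Prod.fst hh).symm
    have hco2 : 2 ≤ ∑ s, m (s, u.2) := by
      calc 2 = m (u.1, u.2) := by rw [Prod.mk.eta]; omega
        _ ≤ ∑ s, m (s, u.2) :=
          Finset.single_le_sum (f := fun s => m (s, u.2)) (fun s _ => Nat.zero_le _)
            (Finset.mem_univ u.1)
    exact hne (huniq u.1 u.2 (by omega) (by omega))
  · -- two off-diagonal pieces of rank 1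
    have hu12 : u.1 ≠ u.2 := by
      intro h
      rw [← Prod.mk.eta (p := u), ← h] at hu1
      rw [hmdiag u.1] at hu1
      omega
    have hv12 : v.1 ≠ v.2 := by
      intro h
      rw [← Prod.mk.eta (p := v), ← h] at hv1
      rw [hmdiag v.1] at hv1
      omega
    have hmval : ∀ w, m w = (if w = u then 1 else 0) + (if w = v then 1 else 0) := by
      intro w
      by_cases h1 : w = u
      · subst h1; rw [if_pos rfl, if_neg huv]; omega
      · by_cases h2 : w = v
        · subst h2; rw [if_neg h1, if_pos rfl]; omega
        · rw [if_neg h1, if_neg h2]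
          exact hrest w h1 h2
    have hsum_ind : ∀ (w : Fin k × Fin k) (r : Fin k),
        (∑ t, if (r, t) = w then 1 else 0) = if w.1 = r then 1 else 0 := by
      intro w r
      by_cases h : w.1 = r
      · rw [if_pos h]
        rw [Finset.sum_eq_single_of_mem w.2 (Finset.mem_univ w.2)]
        · rw [if_pos (by rw [← h, Prod.mk.eta])]
        · intro t _ ht
          rw [if_neg (fun hh => ht (by rw [← hh]))]
      · rw [if_neg h]
        refine Finset.sum_eq_zero fun t _ => ?_
        rw [if_neg (fun hh => h (by rw [← hh]))]
    have hsum_ind' : ∀ (w : Fin k × Fin k) (r : Fin k),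
        (∑ s, if (s, r) = w then 1 else 0) = if w.2 = r then 1 else 0 := by
      intro w r
      by_cases h : w.2 = r
      · rw [if_pos h]
        rw [Finset.sum_eq_single_of_mem w.1 (Finset.mem_univ w.1)]
        · rw [if_pos (by rw [← h, Prod.mk.eta])]
        · intro s _ hs
          rw [if_neg (fun hh => hs (by rw [← hh]))]
      · rw [if_neg h]
        refine Finset.sum_eq_zero fun s _ => ?_
        rw [if_neg (fun hh => h (by rw [← hh]))]
    have hRO : ∀ r, (∑ t, m (r, t)) =
        (if u.1 = r then 1 else 0) + (if v.1 = r then 1 else 0) := by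
      intro r
      rw [Finset.sum_congr rfl (fun t _ => hmval (r, t)), Finset.sum_add_distrib,
        hsum_ind u r, hsum_ind v r]
    have hCO : ∀ r, (∑ s, m (s, r)) =
        (if u.2 = r then 1 else 0) + (if v.2 = r then 1 else 0) := by
      intro r
      rw [Finset.sum_congr rfl (fun s _ => hmval (s, r)), Finset.sum_add_distrib,
        hsum_ind' u r, hsum_ind' v r]
    by_cases hsym : v = (u.2, u.1)
    · -- the good case: the two pieces are transposed to each other
      have hv1fst : v.1 = u.2 := by rw [hsym]
      have hv2snd : v.2 = u.1 := by rw [hsym]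
      have hm_off : ∀ s t : Fin k, s ≠ t → ¬(s = u.1 ∧ t = u.2) → ¬(s = u.2 ∧ t = u.1) →
          m (s, t) = 0 := by
        intro s t hst h1 h2
        refine hrest _ (fun hh => h1 ⟨congrArg Prod.fst hh, congrArg Prod.snd hh⟩)
          (fun hh => h2 ⟨(congrArg Prod.fst hh).trans hv1fst,
            (congrArg Prod.snd hh).trans hv2snd⟩)
      have hDbot : ∀ s t : Fin k, s ≠ t → ¬(s = u.1 ∧ t = u.2) → ¬(s = u.2 ∧ t = u.1) →
          D s t = ⊥ :=
        fun s t hst h1 h2 => hoffbot s t hst (hm_off s t hst h1 h2)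
      have hXY : ∀ t, t ≠ u.1 → t ≠ u.2 → X t = Y t := by
        intro t h1 h2
        have hXt : X t = D t t := by
          rw [hrowd t]
          refine le_antisymm (iSup_le fun t' => ?_) (le_iSup _ t)
          by_cases h : t' = t
          · rw [h]
          · rw [hDbot t t' (fun hh => h hh.symm) (fun hh => h1 hh.1) (fun hh => h2 hh.1)]
            exact bot_le
        have hYt : Y t = D t t := by
          rw [hcold t]
          refine le_antisymm (iSup_le fun s' => ?_) (le_iSup (fun s => D s t) t)
          by_cases h : s' = t
          · rw [h]
          · rw [hDbot s' t h (fun hh => h2 hh.2) (fun hh => h1 hh.2)]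
            exact bot_le
        rw [hXt, hYt]
      have hnb1 : D u.1 u.2 ≠ ⊥ := by
        intro h
        have h0 := Submodule.rank_eq_zero.2 h
        rw [hoffrank u.1 u.2 hu12] at h0
        have h1 : m (u.1, u.2) = 0 := by exact_mod_cast h0
        rw [Prod.mk.eta] at h1
        omega
      have hnb2 : D u.2 u.1 ≠ ⊥ := by
        intro h
        have h0 := Submodule.rank_eq_zero.2 h
        rw [hoffrank u.2 u.1 (fun hh => hu12 hh.symm)] at h0
        have h1 : m (u.2, u.1) = 0 := by exact_mod_cast h0
        rw [← hsym] at h1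
        omega
      have hnp : Module.rank ℂ ↥(D u.1 u.1) + 1 = n u.1 := by
        have h1 := hrow' u.1
        rw [hRO u.1, hv1fst, if_pos rfl, if_neg (fun hh => hu12 hh.symm)] at h1
        rw [h1]
        norm_num
      have hnq : Module.rank ℂ ↥(D u.2 u.2) + 1 = n u.2 := by
        have h1 := hrow' u.2
        rw [hRO u.2, hv1fst, if_neg hu12, if_pos rfl] at h1
        rw [h1]
        norm_num
      exact ⟨u.1, u.2, hu12, fun t h1 h2 => hXY t h1 h2,
        fun s t hst h1 h2 => hDbot s t hst h1 h2, hnb1, hnb2, hnp, hnq⟩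
    · -- the asymmetric case is impossible
      exfalso
      have hkey : ∀ r, (if u.1 = r then 1 else 0) + (if v.1 = r then 1 else 0) ≠
          (if u.2 = r then 1 else 0) + (if v.2 = r then (1:ℕ) else 0) → a r = 0 := by
        intro r h
        refine hbal r ?_
        rw [hRO r, hCO r]
        exact h
      have hdistinct : ∀ r1 r2 : Fin k, r1 ≠ r2 →
          ((if u.1 = r1 then 1 else 0) + (if v.1 = r1 then 1 else 0) ≠
            (if u.2 = r1 then 1 else 0) + (if v.2 = r1 then (1:ℕ) else 0)) →
          ((if u.1 = r2 then 1 else 0) + (if v.1 = r2 then 1 else 0) ≠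
            (if u.2 = r2 then 1 else 0) + (if v.2 = r2 then (1:ℕ) else 0)) → False :=
        fun r1 r2 h h1 h2 => h (ha ((hkey r1 h1).trans (hkey r2 h2).symm))
      have hnsym : ¬(v.1 = u.2 ∧ v.2 = u.1) := by
        intro ⟨h1, h2⟩
        exact hsym (Prod.ext h1 h2)
      by_cases hc : v.1 = u.2
      · have hqp : v.2 ≠ u.1 := fun h => hnsym ⟨hc, h⟩
        refine hdistinct u.1 v.2 (fun h => hqp h.symm) ?_ ?_
        · have e1 : v.1 ≠ u.1 := by rw [hc]; exact fun h => hu12 h.symm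
          have e2 : u.2 ≠ u.1 := fun h => hu12 h.symm
          simp [e1, e2, hqp]
        · have e3 : u.1 ≠ v.2 := fun h => hqp h.symm
          by_cases e4 : u.2 = v.2 <;> simp [e3, e4, hv12]
      · by_cases hd2 : v.2 = u.1
        · have e5 : v.2 ≠ u.2 := by rw [hd2]; exact hu12
          by_cases he : v.1 = u.1
          · refine hdistinct u.1 u.2 hu12 ?_ ?_
            · have e2 : u.2 ≠ u.1 := fun h => hu12 h.symm
              simp [he, hd2, e2]
            · simp [hu12, hc, e5]
          · refine hdistinct v.1 u.2 hc ?_ ?_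
            · have e6 : u.1 ≠ v.1 := fun h => he h.symm
              have e7 : u.2 ≠ v.1 := fun h => hc h.symm
              have e8 : v.2 ≠ v.1 := fun h => hv12 h.symm
              simp [e6, e7, e8]
            · simp [hu12, hc, e5]
        · refine hdistinct u.1 u.2 hu12 ?_ ?_
          · have e2 : u.2 ≠ u.1 := fun h => hu12 h.symm
            by_cases e9 : v.1 = u.1 <;> simp [e2, e9, hd2]
          · by_cases e10 : v.2 = u.2 <;> simp [hu12, hc, e10]



lemma key_lemma {k : ℕ} {a : Fin k → ℝ} {n : Fin k → Cardinal}
    {A B C : H →L[ℂ] H} (hB : MemClass k a n B) (hC : MemClass k a n C)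
    {i j : Fin k} (hij : i ≠ j)
    (ht : ∀ t, t ≠ i → t ≠ j → eigSp A (a t) = eigSp B (a t))
    (hi : eigSp A (a i) ≠ eigSp B (a i)) (hj : eigSp A (a j) ≠ eigSp B (a j))
    {r r2 : Fin k} (hrr2 : r ≠ r2)
    (hout : ∀ t, t ≠ r → t ≠ r2 → eigSp C (a t) = eigSp A (a t))
    (hnbA : eigSp C (a r2) ⊓ eigSp A (a r) ≠ ⊥)
    {p' q' : Fin k} (hpq' : p' ≠ q')
    (hout2 : ∀ t, t ≠ p' → t ≠ q' → eigSp C (a t) = eigSp B (a t))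
    (hri : r ≠ i) (hrj : r ≠ j) : False := by
  have hinfbotB : ∀ s t : Fin k, s ≠ t → eigSp B (a s) ⊓ eigSp B (a t) = ⊥ :=
    fun s t h => inf_eq_bot_of_ortho (hB.2.2.2.1 s t h)
  have hinfbotC : ∀ s t : Fin k, s ≠ t → eigSp C (a s) ⊓ eigSp C (a t) = ⊥ :=
    fun s t h => inf_eq_bot_of_ortho (hC.2.2.2.1 s t h)
  have hABr : eigSp A (a r) = eigSp B (a r) := ht r hri hrj
  -- r2 belongs to the pair {p', q'}
  have hr2P2 : r2 = p' ∨ r2 = q' := by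
    by_contra h
    push_neg at h
    have hCB := hout2 r2 h.1 h.2
    have hne : eigSp B (a r2) ⊓ eigSp B (a r) ≠ ⊥ := by
      rw [← hCB, ← hABr]; exact hnbA
    exact hne (hinfbotB r2 r (fun h => hrr2 h.symm))
  -- r belongs to the pair {p', q'}
  have hrP2 : r = p' ∨ r = q' := by
    by_contra h
    push_neg at h
    have hCB := hout2 r h.1 h.2
    have hne : eigSp C (a r2) ⊓ eigSp C (a r) ≠ ⊥ := by
      rw [hABr, ← hCB] at hnbA; exact hnbA
    exact hne (hinfbotC r2 r (fun h => hrr2 h.symm))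
  -- hence {p', q'} = {r, r2}
  have hout2' : ∀ w, w ≠ r → w ≠ r2 → eigSp C (a w) = eigSp B (a w) := by
    intro w h1 h2
    rcases hrP2 with hr | hr
    · rcases hr2P2 with hr2 | hr2
      · exact absurd (hr.trans hr2.symm) hrr2
      · exact hout2 w (fun hh => h1 (hh.trans hr.symm)) (fun hh => h2 (hh.trans hr2.symm))
    · rcases hr2P2 with hr2 | hr2
      · exact hout2 w (fun hh => h2 (hh.trans hr2.symm)) (fun hh => h1 (hh.trans hr.symm))
      · exact absurd (hr.trans hr2.symm) hrr2
  by_cases hr2i : r2 = i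
  · have hwP1 : eigSp C (a j) = eigSp A (a j) :=
      hout j (fun h => hrj h.symm) (by rw [hr2i]; exact fun h => hij h.symm)
    have hwP2 : eigSp C (a j) = eigSp B (a j) :=
      hout2' j (fun h => hrj h.symm) (by rw [hr2i]; exact fun h => hij h.symm)
    exact hj (hwP1.symm.trans hwP2)
  · have hwP1 : eigSp C (a i) = eigSp A (a i) :=
      hout i (fun h => hri h.symm) (fun h => hr2i h.symm)
    have hwP2 : eigSp C (a i) = eigSp B (a i) :=
      hout2' i (fun h => hri h.symm) (fun h => hr2i h.symm)
    exact hi (hwP1.symm.trans hwP2)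


/-- Suppose `A, B ∈ G(σ, d)` are not commutatively adjacent, their `a t`-eigenspaces coincide
for every `t ≠ i, j`, and their `a i`-eigenspaces as well as their `a j`-eigenspaces differ.
Then every `C ∈ G(σ, d)` commutatively adjacent to both `A, B` is commutatively
`(i, j)`-adjacent to both `A` and `B`. -/
theorem commAdj_to_both_is_ij_adjacent
    (k : ℕ) (a : Fin k → ℝ) (ha : Function.Injective a) (n : Fin k → Cardinal)
    (A B : H →L[ℂ] H) (hA : MemClass k a n A) (hB : MemClass k a n B)
    (i j : Fin k) (hij : i ≠ j)
    (ht : ∀ t, t ≠ i → t ≠ j → eigSp A (a t) = eigSp B (a t))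
    (hi : eigSp A (a i) ≠ eigSp B (a i)) (hj : eigSp A (a j) ≠ eigSp B (a j))
    (hnadj : ¬ CommAdj A B)
    (C : H →L[ℂ] H) (hC : MemClass k a n C)
    (hCA : CommAdj C A) (hCB : CommAdj C B) :
    CommIJAdj k a n i j C A ∧ CommIJAdj k a n i j C B := by
  obtain ⟨p, q, hpq, hout1, hzero1, hnb1, hnb1', hr1p, hr1q⟩ := adj_structure ha hC hA hCA
  obtain ⟨p', q', hpq', hout2, hzero2, hnb2, hnb2', hr2p, hr2q⟩ := adj_structure ha hC hB hCB
  have ht' : ∀ t, t ≠ i → t ≠ j → eigSp B (a t) = eigSp A (a t) :=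
    fun t h1 h2 => (ht t h1 h2).symm
  have hi' : eigSp B (a i) ≠ eigSp A (a i) := fun h => hi h.symm
  have hj' : eigSp B (a j) ≠ eigSp A (a j) := fun h => hj h.symm
  -- p and q belong to {i, j}
  have hp : p = i ∨ p = j := by
    by_contra h
    push_neg at h
    exact key_lemma hB hC hij ht hi hj hpq hout1 hnb1' hpq' hout2 h.1 h.2
  have hq : q = i ∨ q = j := by
    by_contra h
    push_neg at h
    exact key_lemma hB hC hij ht hi hj hpq.symm (fun t h1 h2 => hout1 t h2 h1) hnb1
      hpq' hout2 h.1 h.2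
  have hp' : p' = i ∨ p' = j := by
    by_contra h
    push_neg at h
    exact key_lemma hA hC hij ht' hi' hj' hpq' hout2 hnb2' hpq hout1 h.1 h.2
  have hq' : q' = i ∨ q' = j := by
    by_contra h
    push_neg at h
    exact key_lemma hA hC hij ht' hi' hj' hpq'.symm (fun t h1 h2 => hout2 t h2 h1) hnb2
      hpq hout1 h.1 h.2
  have hPQ : (p = i ∧ q = j) ∨ (p = j ∧ q = i) := by
    rcases hp with h | h <;> rcases hq with h2 | h2
    · exact absurd (h.trans h2.symm) hpq
    · exact Or.inl ⟨h, h2⟩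
    · exact Or.inr ⟨h, h2⟩
    · exact absurd (h.trans h2.symm) hpq
  have hPQ' : (p' = i ∧ q' = j) ∨ (p' = j ∧ q' = i) := by
    rcases hp' with h | h <;> rcases hq' with h2 | h2
    · exact absurd (h.trans h2.symm) hpq'
    · exact Or.inl ⟨h, h2⟩
    · exact Or.inr ⟨h, h2⟩
    · exact absurd (h.trans h2.symm) hpq'
  constructor
  · refine ⟨hCA.1, ?_, ?_, ?_⟩
    · intro t h1 h2
      rcases hPQ with ⟨e1, e2⟩ | ⟨e1, e2⟩
      · exact hout1 t (e1 ▸ h1) (e2 ▸ h2)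
      · exact hout1 t (e1 ▸ h2) (e2 ▸ h1)
    · rcases hPQ with ⟨e1, e2⟩ | ⟨e1, e2⟩
      · exact e1 ▸ hr1p
      · exact e2 ▸ hr1q
    · rcases hPQ with ⟨e1, e2⟩ | ⟨e1, e2⟩
      · exact e2 ▸ hr1q
      · exact e1 ▸ hr1p
  · refine ⟨hCB.1, ?_, ?_, ?_⟩
    · intro t h1 h2
      rcases hPQ' with ⟨e1, e2⟩ | ⟨e1, e2⟩
      · exact hout2 t (e1 ▸ h1) (e2 ▸ h2)
      · exact hout2 t (e1 ▸ h2) (e2 ▸ h1)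
    · rcases hPQ' with ⟨e1, e2⟩ | ⟨e1, e2⟩
      · exact e1 ▸ hr2p
      · exact e2 ▸ hr2q
    · rcases hPQ' with ⟨e1, e2⟩ | ⟨e1, e2⟩
      · exact e2 ▸ hr2q
      · exact e1 ▸ hr2p

end
end
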